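/- For the urn-model N-step distribution ν_N, the expectation of Q(x̄) = (1/n)∑_j ω_1(x_j) is E_{ν_N}(Q) = [1 − (mp/n)(1 − ω_1(x_0))]^N, which is nonnegative when ω_1(x_0) is real, M < 1, and 0 < mp ≤ 1/2. -/

import Mathlib

set_option linter.unusedSectionVars false
set_option linter.unusedTactic false
set_option linter.unusedVariables false
set_option maxHeartbeats 1000000


open scoped BigOperators

attribute [local instance] Classical.propDecidable

noncomputable def avgIdem (K : Type) [Group K] [Fintype K] (L : Subgroup K) :
    MonoidAlgebra ℂ K :=
  (Fintype.card L : ℂ)⁻¹ • ∑ h : L, MonoidAlgebra.of ℂ K (h : K)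

/-- `(K, L)` is a Gelfand pair: the Hecke algebra `e_L ℂK e_L` is commutative. -/
def IsGelfandPair (K : Type) [Group K] [Fintype K] (L : Subgroup K) : Prop :=
  ∀ x y : MonoidAlgebra ℂ K,
    (avgIdem K L * x * avgIdem K L) * (avgIdem K L * y * avgIdem K L) =
      (avgIdem K L * y * avgIdem K L) * (avgIdem K L * x * avgIdem K L)

/-- `ω` is a zonal spherical function of the pair `(K, L)`:
normalized, bi-`L`-invariant, and satisfying the spherical functional equation. -/
def IsZSF (K : Type) [Group K] [Fintype K] (L : Subgroup K) (ω : K → ℂ) : Prop :=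
  ω 1 = 1 ∧
    (∀ g : K, ∀ h ∈ L, ∀ h' ∈ L, ω (h * g * h') = ω g) ∧
    ∀ x y : K, (Fintype.card L : ℂ)⁻¹ * ∑ h : L, ω (x * (h : K) * y) = ω x * ω y

/-- the double coset `L x₀ L` as a set -/
def dcoset (K : Type) [Group K] (L : Subgroup K) (x₀ : K) : Set K :=
  {g : K | ∃ a ∈ L, ∃ b ∈ L, g = a * x₀ * b}

/-- one-step transition probability of the interacting urn model on `(K ⧸ L)^n` -/
noncomputable def step (K : Type) [Group K] [Fintype K] (L : Subgroup K) (x₀ : K)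
    (n m : ℕ) (p : ℝ) (x y : Fin n → K ⧸ L) : ℝ :=
  if x = y then 1 - m * p
  else if ∃ j : Fin n, (∀ i : Fin n, i ≠ j → x i = y i) ∧
      (x j).out⁻¹ * (y j).out ∈ dcoset K L x₀ then p / n
  else 0

/-- the transition matrix `P_{(K,L;n)}` (real version) -/
noncomputable def PmatR (K : Type) [Group K] [Fintype K] (L : Subgroup K) (x₀ : K)
    (n m : ℕ) (p : ℝ) : Matrix (Fin n → K ⧸ L) (Fin n → K ⧸ L) ℝ :=
  Matrix.of fun x y => step K L x₀ n m p x y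

/-- the transition matrix `P_{(K,L;n)}` (complex version) -/
noncomputable def PmatC (K : Type) [Group K] [Fintype K] (L : Subgroup K) (x₀ : K)
    (n m : ℕ) (p : ℝ) : Matrix (Fin n → K ⧸ L) (Fin n → K ⧸ L) ℂ :=
  Matrix.of fun x y => (step K L x₀ n m p x y : ℂ)

/-- the initial state `ē = (L, …, L)` -/
def eQ (K : Type) [Group K] (L : Subgroup K) (n : ℕ) : Fin n → K ⧸ L :=
  fun _ => ((1 : K) : K ⧸ L)

section Aux
variable {K : Type} [Group K] [Fintype K] {L : Subgroup K} {ω : K → ℂ}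

lemma omega_right_inv (hbi : ∀ g : K, ∀ h ∈ L, ∀ h' ∈ L, ω (h * g * h') = ω g)
    (g : K) {h : K} (hh : h ∈ L) : ω (g * h) = ω g := by
  simpa using hbi g 1 L.one_mem h hh

lemma omega_out (hbi : ∀ g : K, ∀ h ∈ L, ∀ h' ∈ L, ω (h * g * h') = ω g)
    (g : K) : ω ((g : K ⧸ L)).out = ω g := by
  obtain ⟨h, hh⟩ := QuotientGroup.mk_out_eq_mul L g
  rw [hh, omega_right_inv hbi g h.2]

lemma omega_abs_le (hω1 : ω 1 = 1)
    (hfe : ∀ x y : K, (Fintype.card L : ℂ)⁻¹ * ∑ h : L, ω (x * (h : K) * y) = ω x * ω y)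
    (g : K) : ‖ω g‖ ≤ 1 := by
  obtain ⟨b, -, hb⟩ := Finset.exists_max_image (Finset.univ : Finset K)
    (fun g => ‖ω g‖) ⟨1, Finset.mem_univ 1⟩
  have h1 : 1 ≤ ‖ω b‖ := by
    have := hb 1 (Finset.mem_univ 1); rwa [hω1, norm_one] at this
  have hL : (0:ℝ) < (Fintype.card L : ℝ) := by exact_mod_cast Fintype.card_pos
  have h2 : ‖ω b‖ * ‖ω b‖ ≤ ‖ω b‖ := by
    rw [← norm_mul, ← hfe b b, norm_mul]
    have e1 : ‖(Fintype.card L : ℂ)⁻¹‖ = (Fintype.card L : ℝ)⁻¹ := by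
      rw [norm_inv, Complex.norm_natCast]
    rw [e1]
    have e2 : ‖∑ h : L, ω (b * (h:K) * b)‖ ≤ (Fintype.card L : ℝ) * ‖ω b‖ := by
      refine le_trans (norm_sum_le _ _) ?_
      have : ∀ h : L, ‖ω (b * (h:K) * b)‖ ≤ ‖ω b‖ := fun h =>
        hb _ (Finset.mem_univ _)
      calc ∑ h : L, ‖ω (b * (h:K) * b)‖ ≤ ∑ _h : L, ‖ω b‖ :=
            Finset.sum_le_sum (fun h _ => this h)
        _ = (Fintype.card L : ℝ) * ‖ω b‖ := by
            rw [Finset.sum_const, nsmul_eq_mul, Finset.card_univ]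
    calc (Fintype.card L : ℝ)⁻¹ * ‖∑ h : L, ω (b * (h:K) * b)‖
        ≤ (Fintype.card L : ℝ)⁻¹ * ((Fintype.card L : ℝ) * ‖ω b‖) := by
          apply mul_le_mul_of_nonneg_left e2 (by positivity)
      _ = ‖ω b‖ := by field_simp
  have h3 : ‖ω b‖ ≤ 1 := by nlinarith
  exact le_trans (hb g (Finset.mem_univ g)) h3

lemma one_not_mem_dcoset {x₀ : K} (hx₀ : x₀ ∉ L) : (1 : K) ∉ dcoset K L x₀ := by
  rintro ⟨a, ha, b, hb, hab⟩
  apply hx₀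
  have hx : x₀ = a⁻¹ * b⁻¹ := by
    have h' : a * x₀ * b = 1 := hab.symm
    have : x₀ = a⁻¹ * 1 * b⁻¹ := by rw [← h']; group
    simpa using this
  rw [hx]; exact L.mul_mem (L.inv_mem ha) (L.inv_mem hb)

lemma dcoset_mul_mem_iff {x₀ g h : K} (hh : h ∈ L) :
    g * h ∈ dcoset K L x₀ ↔ g ∈ dcoset K L x₀ := by
  constructor
  · rintro ⟨a, ha, b, hb, hab⟩
    exact ⟨a, ha, b * h⁻¹, L.mul_mem hb (L.inv_mem hh), by
      rw [← mul_assoc]; rw [← hab]; group⟩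
  · rintro ⟨a, ha, b, hb, hab⟩
    exact ⟨a, ha, b * h, L.mul_mem hb hh, by rw [hab]; group⟩

end Aux

section Count
variable {K : Type} [Group K] [Fintype K] {L : Subgroup K}

/-- the double coset as a finset -/
noncomputable def Dfin (L : Subgroup K) (x₀ : K) : Finset K :=
  Finset.univ.filter (· ∈ dcoset K L x₀)

/-- the fiber of the multiplication map over `g` -/
noncomputable def dfib (L : Subgroup K) (x₀ g : K) : Finset (L × L) :=
  Finset.univ.filter (fun q => (q.1 : K) * x₀ * (q.2 : K) = g)

lemma image_pair_eq (x₀ : K) :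
    (Finset.univ.image fun q : L × L => (q.1 : K) * x₀ * (q.2 : K)) = Dfin L x₀ := by
  ext g
  simp only [Finset.mem_image, Finset.mem_univ, true_and, Dfin, Finset.mem_filter,
    dcoset, Set.mem_setOf_eq]
  constructor
  · rintro ⟨⟨⟨a, ha⟩, ⟨b, hb⟩⟩, rfl⟩
    exact ⟨a, ha, b, hb, rfl⟩
  · rintro ⟨a, ha, b, hb, rfl⟩
    exact ⟨⟨⟨a, ha⟩, ⟨b, hb⟩⟩, rfl⟩

lemma dfib_card_eq (x₀ : K) {g : K} (hg : g ∈ Dfin L x₀) :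
    (dfib L x₀ g).card = (dfib L x₀ x₀).card := by
  simp only [Dfin, Finset.mem_filter, Finset.mem_univ, true_and] at hg
  obtain ⟨a, ha, b, hb, rfl⟩ := hg
  apply Finset.card_bij' (fun q _ => ((⟨a, ha⟩ : L)⁻¹ * q.1, q.2 * (⟨b, hb⟩ : L)⁻¹))
    (fun q _ => ((⟨a, ha⟩ : L) * q.1, q.2 * (⟨b, hb⟩ : L)))
  · rintro ⟨u, v⟩ hq
    simp only [dfib, Finset.mem_filter, Finset.mem_univ, true_and] at hq ⊢
    have : (a⁻¹ * (u : K)) * x₀ * ((v : K) * b⁻¹) = a⁻¹ * ((u : K) * x₀ * (v : K)) * b⁻¹ := by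
      group
    rw [Subgroup.coe_mul, Subgroup.coe_mul, Subgroup.coe_inv, Subgroup.coe_inv]
    rw [this, hq]
    group
  · rintro ⟨u, v⟩ hq
    simp only [dfib, Finset.mem_filter, Finset.mem_univ, true_and] at hq ⊢
    have : (a * (u : K)) * x₀ * ((v : K) * b) = a * ((u : K) * x₀ * (v : K)) * b := by group
    rw [Subgroup.coe_mul, Subgroup.coe_mul, this, hq]
  · rintro ⟨u, v⟩ _; simp [mul_assoc]
  · rintro ⟨u, v⟩ _; simp [← mul_assoc]

lemma pair_sum (x₀ : K) (f : K → ℂ) :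
    ∑ q : L × L, f ((q.1 : K) * x₀ * (q.2 : K)) =
      ((dfib L x₀ x₀).card : ℂ) * ∑ g ∈ Dfin L x₀, f g := by
  rw [Finset.sum_comp f (fun q : L × L => (q.1 : K) * x₀ * (q.2 : K)), image_pair_eq,
    Finset.mul_sum]
  refine Finset.sum_congr rfl fun g hg => ?_
  have hc : (Finset.filter (fun q : L × L => (q.1 : K) * x₀ * (q.2 : K) = g) Finset.univ)
      = dfib L x₀ g := by
    ext q; simp [dfib]
  rw [hc, dfib_card_eq x₀ hg, nsmul_eq_mul]

end Count

section Sums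
variable {K : Type} [Group K] [Fintype K] {L : Subgroup K} {ω : K → ℂ}

lemma cardL_ne_zero (L : Subgroup K) : (Fintype.card L : ℂ) ≠ 0 :=
  Nat.cast_ne_zero.2 Fintype.card_ne_zero

lemma elem_dcoset_sum
    (hbi : ∀ g : K, ∀ h ∈ L, ∀ h' ∈ L, ω (h * g * h') = ω g)
    (hfe : ∀ x y : K, (Fintype.card L : ℂ)⁻¹ * ∑ h : L, ω (x * (h : K) * y) = ω x * ω y)
    (x₀ a : K) :
    ((dfib L x₀ x₀).card : ℂ) * ∑ g ∈ Dfin L x₀, ω (a * g) =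
      (Fintype.card L : ℂ) ^ 2 * (ω a * ω x₀) := by
  have h1 := (pair_sum (L := L) x₀ (fun g => ω (a * g))).symm
  rw [h1]
  have h2 : ∀ u v : L, ω (a * ((u : K) * x₀ * (v : K))) = ω (a * (u : K) * x₀) := by
    intro u v
    have e : a * ((u : K) * x₀ * (v : K)) = (a * (u : K) * x₀) * (v : K) := by group
    rw [e, omega_right_inv hbi _ v.2]
  rw [Fintype.sum_prod_type]
  simp_rw [h2]
  have h3 : ∀ u : L, ∑ _v : L, ω (a * (u : K) * x₀) =
      (Fintype.card L : ℂ) * ω (a * (u : K) * x₀) := by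
    intro u; rw [Finset.sum_const, nsmul_eq_mul, Finset.card_univ]
  simp_rw [h3]
  rw [← Finset.mul_sum]
  have h4 : ∑ u : L, ω (a * (u : K) * x₀) = (Fintype.card L : ℂ) * (ω a * ω x₀) := by
    rw [← hfe a x₀, ← mul_assoc, mul_inv_cancel₀ (cardL_ne_zero L), one_mul]
  rw [h4]; ring

lemma card_Dfin (x₀ : K) (m : ℕ) (hm : m * Nat.card L = Nat.card (dcoset K L x₀)) :
    (Dfin L x₀).card = m * Fintype.card L := by
  have h : Nat.card (dcoset K L x₀) = (Dfin L x₀).card := by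
    rw [Nat.card_eq_fintype_card, Fintype.card_subtype]
    congr 1
  rw [← h, ← hm, Nat.card_eq_fintype_card]

lemma const_one_fe :
    ∀ x y : K, (Fintype.card L : ℂ)⁻¹ * ∑ _h : L, (1 : ℂ) = (1 : ℂ) * 1 := by
  intro x y
  rw [Finset.sum_const, nsmul_eq_mul, Finset.card_univ, mul_one,
    inv_mul_cancel₀ (cardL_ne_zero L), mul_one]

lemma c_mul_m (x₀ : K) (m : ℕ) (hm : m * Nat.card L = Nat.card (dcoset K L x₀)) :
    ((dfib L x₀ x₀).card : ℂ) * m = (Fintype.card L : ℂ) := by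
  have h1 := elem_dcoset_sum (L := L) (ω := fun _ => (1 : ℂ))
    (fun _ _ _ _ _ => rfl) const_one_fe x₀ 1
  simp at h1
  rw [card_Dfin x₀ m hm] at h1
  have hL := cardL_ne_zero L
  have h2 : ((dfib L x₀ x₀).card : ℂ) * (m * Fintype.card L) =
      (Fintype.card L : ℂ) ^ 2 := by exact_mod_cast h1
  have h3 : (((dfib L x₀ x₀).card : ℂ) * m) * Fintype.card L =
      (Fintype.card L : ℂ) * Fintype.card L := by rw [mul_assoc, h2]; ring
  exact mul_right_cancel₀ hL h3

lemma dcoset_sum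
    (hbi : ∀ g : K, ∀ h ∈ L, ∀ h' ∈ L, ω (h * g * h') = ω g)
    (hfe : ∀ x y : K, (Fintype.card L : ℂ)⁻¹ * ∑ h : L, ω (x * (h : K) * y) = ω x * ω y)
    (x₀ a : K) (m : ℕ) (hm : m * Nat.card L = Nat.card (dcoset K L x₀)) :
    ∑ g ∈ Dfin L x₀, ω (a * g) = (m : ℂ) * (Fintype.card L : ℂ) * (ω a * ω x₀) := by
  have hL := cardL_ne_zero L
  have h1 := elem_dcoset_sum hbi hfe x₀ a
  have h2 := c_mul_m x₀ m hm
  have h3 : (Fintype.card L : ℂ) * (∑ g ∈ Dfin L x₀, ω (a * g)) =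
      (Fintype.card L : ℂ) * ((m : ℂ) * (Fintype.card L : ℂ) * (ω a * ω x₀)) := by
    calc (Fintype.card L : ℂ) * (∑ g ∈ Dfin L x₀, ω (a * g))
        = (((dfib L x₀ x₀).card : ℂ) * m) * (∑ g ∈ Dfin L x₀, ω (a * g)) := by rw [h2]
      _ = (m : ℂ) * (((dfib L x₀ x₀).card : ℂ) * ∑ g ∈ Dfin L x₀, ω (a * g)) := by ring
      _ = (m : ℂ) * ((Fintype.card L : ℂ) ^ 2 * (ω a * ω x₀)) := by rw [h1]
      _ = (Fintype.card L : ℂ) * ((m : ℂ) * (Fintype.card L : ℂ) * (ω a * ω x₀)) := by ring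
  exact mul_left_cancel₀ hL h3

end Sums

section CosetSum
variable {K : Type} [Group K] [Fintype K] {L : Subgroup K} {ω : K → ℂ}

lemma coset_sum
    (hbi : ∀ g : K, ∀ h ∈ L, ∀ h' ∈ L, ω (h * g * h') = ω g)
    (hfe : ∀ x y : K, (Fintype.card L : ℂ)⁻¹ * ∑ h : L, ω (x * (h : K) * y) = ω x * ω y)
    (x₀ a : K) (m : ℕ) (hm : m * Nat.card L = Nat.card (dcoset K L x₀)) :
    ∑ d ∈ Finset.univ.filter (fun d : K ⧸ L => a⁻¹ * d.out ∈ dcoset K L x₀), ω d.out =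
      (m : ℂ) * (ω a * ω x₀) := by
  have hL := cardL_ne_zero L
  have key : ∑ g : K, (if a⁻¹ * g ∈ dcoset K L x₀ then ω g else 0) =
      (Fintype.card L : ℂ) *
        ∑ d ∈ Finset.univ.filter (fun d : K ⧸ L => a⁻¹ * d.out ∈ dcoset K L x₀), ω d.out := by
    rw [← Finset.sum_fiberwise Finset.univ (QuotientGroup.mk (s := L))
      (fun g => if a⁻¹ * g ∈ dcoset K L x₀ then ω g else 0)]
    have inner : ∀ d : K ⧸ L,
        ∑ g ∈ Finset.univ.filter (fun g : K => (g : K ⧸ L) = d),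
          (if a⁻¹ * g ∈ dcoset K L x₀ then ω g else 0) =
        (Fintype.card L : ℂ) * (if a⁻¹ * d.out ∈ dcoset K L x₀ then ω d.out else 0) := by
      intro d
      have hstep : ∑ g ∈ Finset.univ.filter (fun g : K => (g : K ⧸ L) = d),
          (if a⁻¹ * g ∈ dcoset K L x₀ then ω g else 0) =
          ∑ _h : L, (if a⁻¹ * d.out ∈ dcoset K L x₀ then ω d.out else 0) := by
        refine Finset.sum_bij' (fun (g : K) (hg : g ∈ Finset.univ.filter
              (fun g : K => (g : K ⧸ L) = d)) => (⟨d.out⁻¹ * g, by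
            simp only [Finset.mem_filter, Finset.mem_univ, true_and] at hg
            rw [← QuotientGroup.eq, QuotientGroup.out_eq', hg]⟩ : L))
          (fun h _ => d.out * (h : K)) ?hi ?hj ?li ?ri ?hv
        case hi => intro g hg; exact Finset.mem_univ _
        case hj =>
          intro h _
          simp only [Finset.mem_filter, Finset.mem_univ, true_and]
          rw [QuotientGroup.mk_mul_of_mem _ h.2, QuotientGroup.out_eq']
        case li => intro g hg; simp
        case ri => intro h _; simp
        case hv =>
          intro g hg
          simp only [Finset.mem_filter, Finset.mem_univ, true_and] at hg
          have hmem : d.out⁻¹ * g ∈ L := by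
            rw [← QuotientGroup.eq, QuotientGroup.out_eq', hg]
          have e1 : a⁻¹ * g = (a⁻¹ * d.out) * (d.out⁻¹ * g) := by group
          by_cases hc : a⁻¹ * d.out ∈ dcoset K L x₀
          · rw [if_pos hc, if_pos (by rw [e1]; exact (dcoset_mul_mem_iff hmem).2 hc)]
            have e2 : g = d.out * (d.out⁻¹ * g) := by group
            conv_lhs => rw [e2]
            exact omega_right_inv hbi _ hmem
          · rw [if_neg hc, if_neg (by rw [e1, dcoset_mul_mem_iff hmem]; exact hc)]
      rw [hstep, Finset.sum_const, nsmul_eq_mul, Finset.card_univ]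
    calc ∑ d : K ⧸ L, ∑ g ∈ Finset.univ.filter (fun g : K => (g : K ⧸ L) = d),
          (if a⁻¹ * g ∈ dcoset K L x₀ then ω g else 0)
        = ∑ d : K ⧸ L, (Fintype.card L : ℂ) *
            (if a⁻¹ * d.out ∈ dcoset K L x₀ then ω d.out else 0) :=
          Finset.sum_congr rfl fun d _ => inner d
      _ = (Fintype.card L : ℂ) * ∑ d : K ⧸ L,
            (if a⁻¹ * d.out ∈ dcoset K L x₀ then ω d.out else 0) := by rw [← Finset.mul_sum]
      _ = _ := by rw [Finset.sum_filter]
  have key2 : ∑ g : K, (if a⁻¹ * g ∈ dcoset K L x₀ then ω g else 0) =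
      ∑ g ∈ Dfin L x₀, ω (a * g) := by
    rw [← Finset.sum_filter]
    refine Finset.sum_bij' (fun (g : K) (_ : g ∈ Finset.univ.filter
        (fun g : K => a⁻¹ * g ∈ dcoset K L x₀)) => a⁻¹ * g) (fun g _ => a * g)
        ?hi2 ?hj2 ?li2 ?ri2 ?hv2
    case hi2 =>
      intro g hg
      simp only [Finset.mem_filter, Finset.mem_univ, true_and] at hg
      simp only [Dfin, Finset.mem_filter, Finset.mem_univ, true_and]
      exact hg
    case hj2 =>
      intro g hg
      simp only [Dfin, Finset.mem_filter, Finset.mem_univ, true_and] at hg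
      simp only [Finset.mem_filter, Finset.mem_univ, true_and, inv_mul_cancel_left]
      exact hg
    case li2 => intro g _; simp
    case ri2 => intro g _; simp
    case hv2 => intro g _; rw [mul_inv_cancel_left]
  rw [key2] at key
  rw [dcoset_sum hbi hfe x₀ a m hm] at key
  have : (Fintype.card L : ℂ) * ((m : ℂ) * (ω a * ω x₀)) =
      (Fintype.card L : ℂ) *
        ∑ d ∈ Finset.univ.filter (fun d : K ⧸ L => a⁻¹ * d.out ∈ dcoset K L x₀), ω d.out := by
    rw [← key]; ring
  exact (mul_left_cancel₀ hL this).symm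

lemma coset_card (x₀ a : K) (m : ℕ) (hm : m * Nat.card L = Nat.card (dcoset K L x₀)) :
    ((Finset.univ.filter (fun d : K ⧸ L => a⁻¹ * d.out ∈ dcoset K L x₀)).card : ℂ) = m := by
  have h := coset_sum (ω := fun _ => (1 : ℂ)) (L := L)
    (fun _ _ _ _ _ => rfl) const_one_fe x₀ a m hm
  simpa using h

end CosetSum

section Eig
variable {K : Type} [Group K] [Fintype K] {L : Subgroup K} {ω : K → ℂ}

lemma eig
    (hbi : ∀ g : K, ∀ h ∈ L, ∀ h' ∈ L, ω (h * g * h') = ω g)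
    (hfe : ∀ x y : K, (Fintype.card L : ℂ)⁻¹ * ∑ h : L, ω (x * (h : K) * y) = ω x * ω y)
    (x₀ : K) (hx₀ : x₀ ∉ L)
    (m : ℕ) (hm : m * Nat.card L = Nat.card (dcoset K L x₀))
    (p : ℝ) (n : ℕ) (hn : 0 < n)
    (x : Fin n → K ⧸ L) :
    ∑ y : Fin n → K ⧸ L, (step K L x₀ n m p x y : ℂ) *
        ((n : ℂ)⁻¹ * ∑ j : Fin n, ω (y j).out) =
      (1 - ((m : ℂ) * p / n) * (1 - ω x₀)) *
        ((n : ℂ)⁻¹ * ∑ j : Fin n, ω (x j).out) := by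
  have hnC : (n : ℂ) ≠ 0 := Nat.cast_ne_zero.2 hn.ne'
  set v : (Fin n → K ⧸ L) → ℂ := fun y => (n : ℂ)⁻¹ * ∑ j : Fin n, ω (y j).out with hv
  set C : (Fin n → K ⧸ L) → Prop := fun y => ∃ j : Fin n,
    (∀ i : Fin n, i ≠ j → x i = y i) ∧ (x j).out⁻¹ * (y j).out ∈ dcoset K L x₀ with hCdef
  have hCne : ∀ y, C y → y ≠ x := by
    rintro y ⟨j, hij, hD⟩ rfl
    exact one_not_mem_dcoset hx₀ (by simpa using hD)
  have hstepx : (step K L x₀ n m p x x : ℂ) = 1 - (m : ℂ) * p := by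
    simp only [step, if_pos rfl]; push_cast; ring
  have hstepne : ∀ y, y ≠ x → (step K L x₀ n m p x y : ℂ) =
      if C y then ((p : ℂ) / n) else 0 := by
    intro y hy
    have hxy : ¬ (x = y) := fun h => hy h.symm
    simp only [hCdef]
    simp only [step]
    rw [if_neg hxy]
    by_cases hc : ∃ j : Fin n, (∀ i : Fin n, i ≠ j → x i = y i) ∧
        (x j).out⁻¹ * (y j).out ∈ dcoset K L x₀
    · rw [if_pos hc, if_pos hc]; push_cast; ring
    · rw [if_neg hc, if_neg hc]; norm_num
  rw [← Finset.add_sum_erase _ _ (Finset.mem_univ x), hstepx]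
  have herase : ∑ y ∈ Finset.univ.erase x, (step K L x₀ n m p x y : ℂ) * v y =
      ((p : ℂ) / n) * ∑ y ∈ Finset.univ.filter C, v y := by
    calc ∑ y ∈ Finset.univ.erase x, (step K L x₀ n m p x y : ℂ) * v y
        = ∑ y ∈ Finset.univ.erase x, (if C y then ((p : ℂ) / n) * v y else 0) := by
          refine Finset.sum_congr rfl fun y hy => ?_
          rw [hstepne y (Finset.mem_erase.1 hy).1, ite_mul, zero_mul]
      _ = ∑ y : Fin n → K ⧸ L, (if C y then ((p : ℂ) / n) * v y else 0) := by
          rw [← Finset.add_sum_erase _ _ (Finset.mem_univ x),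
            if_neg (fun h => hCne x h rfl), zero_add]
      _ = ∑ y ∈ Finset.univ.filter C, ((p : ℂ) / n) * v y := (Finset.sum_filter _ _).symm
      _ = ((p : ℂ) / n) * ∑ y ∈ Finset.univ.filter C, v y := by rw [Finset.mul_sum]
  rw [herase]
  -- reindex the filtered sum by (coordinate, new coset)
  have hne' : ∀ (j : Fin n) (d : K ⧸ L),
      (x j).out⁻¹ * d.out ∈ dcoset K L x₀ → d ≠ x j := by
    rintro j d hd rfl
    exact one_not_mem_dcoset hx₀ (by simpa using hd)
  have hsigma : ∑ y ∈ Finset.univ.filter C, v y =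
      ∑ q ∈ (Finset.univ : Finset (Fin n)).sigma
          (fun j => Finset.univ.filter (fun d : K ⧸ L => (x j).out⁻¹ * d.out ∈ dcoset K L x₀)),
        v (Function.update x q.1 q.2) := by
    refine (Finset.sum_bij
      (fun (q : Σ _ : Fin n, K ⧸ L) (_ : q ∈ _) => Function.update x q.1 q.2)
      ?_ ?_ ?_ ?_).symm
    · rintro ⟨j, d⟩ hq
      simp only [Finset.mem_sigma, Finset.mem_univ, true_and, Finset.mem_filter] at hq
      simp only [Finset.mem_filter, Finset.mem_univ, true_and, hCdef]
      refine ⟨j, fun i hi => (Function.update_of_ne hi d x).symm, ?_⟩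
      rw [Function.update_self]
      exact hq
    · rintro ⟨j₁, d₁⟩ hq₁ ⟨j₂, d₂⟩ hq₂ heq
      simp only [Finset.mem_sigma, Finset.mem_univ, true_and, Finset.mem_filter] at hq₁ hq₂
      by_cases hj : j₁ = j₂
      · subst hj
        have h2 := congrFun heq j₁
        simp only [Function.update_self] at h2
        subst h2; rfl
      · exfalso
        have h2 := congrFun heq j₁
        simp only [Function.update_self, Function.update_of_ne hj] at h2
        exact hne' j₁ d₁ hq₁ h2
    · intro y hy
      simp only [Finset.mem_filter, Finset.mem_univ, true_and, hCdef] at hy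
      obtain ⟨j, hij, hD⟩ := hy
      refine ⟨⟨j, y j⟩, ?_, ?_⟩
      · simp only [Finset.mem_sigma, Finset.mem_univ, true_and, Finset.mem_filter]
        exact hD
      · funext i
        by_cases hi : i = j
        · subst hi; simp only [Function.update_self]
        · simp only [Function.update_of_ne hi]
          exact hij i hi
    · intro q hq; rfl
  rw [hsigma, Finset.sum_sigma]
  have hupdate : ∀ (j : Fin n) (d : K ⧸ L),
      v (Function.update x j d) = v x + (n : ℂ)⁻¹ * (ω d.out - ω ((x j).out)) := by
    intro j d
    have hsum : ∑ i : Fin n, ω ((Function.update x j d i).out) =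
        ∑ i : Fin n, Function.update (fun i => ω ((x i).out)) j (ω d.out) i :=
      Finset.sum_congr rfl fun i _ =>
        Function.apply_update (fun _ c => ω (Quotient.out c)) x j d i
    simp only [hv]
    rw [hsum, Finset.sum_update_of_mem (Finset.mem_univ j),
      Finset.sum_eq_sum_sdiff_singleton_add (Finset.mem_univ j) (fun i => ω ((x i).out))]
    ring
  have hinner : ∀ j : Fin n,
      ∑ d ∈ Finset.univ.filter (fun d : K ⧸ L => (x j).out⁻¹ * d.out ∈ dcoset K L x₀),
        v (Function.update x j d) =
      (m : ℂ) * v x + (n : ℂ)⁻¹ *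
        ((m : ℂ) * (ω ((x j).out) * ω x₀) - (m : ℂ) * ω ((x j).out)) := by
    intro j
    rw [Finset.sum_congr rfl fun d _ => hupdate j d]
    rw [Finset.sum_add_distrib, Finset.sum_const, ← Finset.mul_sum, Finset.sum_sub_distrib,
      coset_sum hbi hfe x₀ ((x j).out) m hm, Finset.sum_const, nsmul_eq_mul, nsmul_eq_mul]
    rw [coset_card x₀ ((x j).out) m hm]
  rw [Finset.sum_congr rfl fun j _ => hinner j]
  rw [Finset.sum_add_distrib, Finset.sum_const, ← Finset.mul_sum, Finset.card_univ,
    Fintype.card_fin, nsmul_eq_mul]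
  have hA : ∑ j : Fin n, ((m : ℂ) * (ω ((x j).out) * ω x₀) - (m : ℂ) * ω ((x j).out)) =
      (m : ℂ) * (ω x₀ - 1) * ∑ j : Fin n, ω ((x j).out) := by
    rw [Finset.mul_sum]
    exact Finset.sum_congr rfl fun j _ => by ring
  rw [hA]
  simp only [hv]
  field_simp
  ring
end Eig


/-- Expectation of `Q` under the `N`-step distribution:
`E_{ν_N}(Q) = (1 - (mp/n)(1 - ω₁(x₀)))^N`, and this quantity is nonnegative (real) when
`ω_i(x₀) ∈ ℝ`, `M < 1` and `0 < mp ≤ 1/2`. -/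
theorem mean_of_Q_nstep
    (K : Type) [Group K] [Fintype K] (L : Subgroup K)
    (hGP : IsGelfandPair K L)
    (s : ℕ) [NeZero s] (hs : 2 ≤ s)
    (ω : Fin s → K → ℂ)
    (hzsf : ∀ i, IsZSF K L (ω i))
    (hω0 : ∀ g : K, ω 0 g = 1)
    (hinj : Function.Injective ω)
    (hcomplete : s = Nat.card (DoubleCoset.Quotient (L : Set K) (L : Set K)))
    (x₀ : K) (hx₀ : x₀ ∉ L)
    (m : ℕ) (hm : m * Nat.card L = Nat.card (dcoset K L x₀))
    (hreal : ∀ i, (ω i x₀).im = 0)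
    (M : ℝ)
    (hM : IsGreatest (Set.range fun i : {i : Fin s // i ≠ 0} => (ω (i : Fin s) x₀).re) M)
    (hM1 : M < 1)
    (p : ℝ) (hp0 : 0 < m * p) (hp2 : m * p ≤ 1 / 2)
    (n : ℕ) (hn : 0 < n) (N : ℕ) :
    ∑ x : Fin n → K ⧸ L,
        (PmatC K L x₀ n m p ^ N) (eQ K L n) x *
          ((n : ℂ)⁻¹ * ∑ j : Fin n, ω ⟨1, hs⟩ (x j).out) =
      (1 - ((m : ℂ) * p / n) * (1 - ω ⟨1, hs⟩ x₀)) ^ N ∧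
      0 ≤ ((1 - ((m : ℂ) * p / n) * (1 - ω ⟨1, hs⟩ x₀)) ^ N).re := by
  obtain ⟨hω1, hbi, hfe⟩ := hzsf ⟨1, hs⟩
  have hnC : (n : ℂ) ≠ 0 := Nat.cast_ne_zero.2 hn.ne'
  set lam : ℂ := 1 - ((m : ℂ) * p / n) * (1 - ω ⟨1, hs⟩ x₀) with hlam
  have hE : ∀ N : ℕ, ∑ x : Fin n → K ⧸ L,
      (PmatC K L x₀ n m p ^ N) (eQ K L n) x *
        ((n : ℂ)⁻¹ * ∑ j : Fin n, ω ⟨1, hs⟩ (x j).out) = lam ^ N := by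
    intro N
    induction N with
    | zero =>
      simp only [pow_zero, Matrix.one_apply]
      rw [Finset.sum_eq_single (eQ K L n)]
      · rw [if_pos rfl, one_mul]
        have h1 : ∀ j : Fin n, ω ⟨1, hs⟩ (eQ K L n j).out = 1 := by
          intro j
          show ω ⟨1, hs⟩ (((1 : K) : K ⧸ L)).out = 1
          rw [omega_out hbi 1, hω1]
        rw [Finset.sum_congr rfl fun j _ => h1 j, Finset.sum_const, Finset.card_univ,
          Fintype.card_fin, nsmul_eq_mul, mul_one, inv_mul_cancel₀ hnC]
      · intro b _ hb
        rw [if_neg (fun h => hb h.symm), zero_mul]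
      · intro h; exact absurd (Finset.mem_univ _) h
    | succ N ih =>
      rw [pow_succ]
      have hPC : ∀ z x : Fin n → K ⧸ L, PmatC K L x₀ n m p z x = (step K L x₀ n m p z x : ℂ) :=
        fun z x => rfl
      calc ∑ x : Fin n → K ⧸ L,
            (PmatC K L x₀ n m p ^ N * PmatC K L x₀ n m p) (eQ K L n) x *
              ((n : ℂ)⁻¹ * ∑ j : Fin n, ω ⟨1, hs⟩ (x j).out)
          = ∑ x : Fin n → K ⧸ L, ∑ z : Fin n → K ⧸ L,
              (PmatC K L x₀ n m p ^ N) (eQ K L n) z *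
                (PmatC K L x₀ n m p z x * ((n : ℂ)⁻¹ * ∑ j : Fin n, ω ⟨1, hs⟩ (x j).out)) := by
            refine Finset.sum_congr rfl fun x _ => ?_
            rw [Matrix.mul_apply, Finset.sum_mul]
            exact Finset.sum_congr rfl fun z _ => by ring
        _ = ∑ z : Fin n → K ⧸ L, ∑ x : Fin n → K ⧸ L,
              (PmatC K L x₀ n m p ^ N) (eQ K L n) z *
                (PmatC K L x₀ n m p z x * ((n : ℂ)⁻¹ * ∑ j : Fin n, ω ⟨1, hs⟩ (x j).out)) :=
            Finset.sum_comm
        _ = ∑ z : Fin n → K ⧸ L,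
              (PmatC K L x₀ n m p ^ N) (eQ K L n) z *
                (lam * ((n : ℂ)⁻¹ * ∑ j : Fin n, ω ⟨1, hs⟩ (z j).out)) := by
            refine Finset.sum_congr rfl fun z _ => ?_
            rw [← Finset.mul_sum]
            congr 1
            simp only [hPC]
            rw [hlam]
            exact eig hbi hfe x₀ hx₀ m hm p n hn z
        _ = lam * ∑ z : Fin n → K ⧸ L,
              (PmatC K L x₀ n m p ^ N) (eQ K L n) z *
                ((n : ℂ)⁻¹ * ∑ j : Fin n, ω ⟨1, hs⟩ (z j).out) := by
            rw [Finset.mul_sum]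
            exact Finset.sum_congr rfl fun z _ => by ring
        _ = lam ^ (N + 1) := by rw [ih, pow_succ]; ring
  refine ⟨hE N, ?_⟩
  have habs := omega_abs_le hω1 hfe x₀
  have hre : ω ⟨1, hs⟩ x₀ = (((ω ⟨1, hs⟩ x₀).re : ℝ) : ℂ) := by
    apply Complex.ext
    · simp
    · simp [hreal ⟨1, hs⟩]
  set r : ℝ := (ω ⟨1, hs⟩ x₀).re with hr
  have hrabs : |r| ≤ 1 := le_trans (Complex.abs_re_le_norm _) habs
  have hr1 : -1 ≤ r := (abs_le.1 hrabs).1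
  have hr2 : r ≤ 1 := (abs_le.1 hrabs).2
  have hn1 : (1 : ℝ) ≤ (n : ℝ) := by exact_mod_cast hn
  have hnR : (0 : ℝ) < (n : ℝ) := by linarith
  have hbase : (0 : ℝ) ≤ 1 - ((m : ℝ) * p / n) * (1 - r) := by
    have h1 : ((m : ℝ) * p / n) * (1 - r) ≤ ((m : ℝ) * p / n) * 2 := by
      apply mul_le_mul_of_nonneg_left (by linarith)
      positivity
    have h2 : ((m : ℝ) * p / n) * 2 ≤ 1 := by
      rw [div_mul_eq_mul_div, div_le_one hnR]
      nlinarith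
    linarith
  have hlamre : lam = ((1 - ((m : ℝ) * p / n) * (1 - r) : ℝ) : ℂ) := by
    rw [hlam, hre]; push_cast; ring
  rw [hlamre, ← Complex.ofReal_pow, Complex.ofReal_re]
  exact pow_nonneg hbase N
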